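/- Let n ≥ 1 and set X = (1/4) ( I_{n²} + C_n − (2/(n+2)) (vec I_n)(vec I_n)ᵀ ). Then X is the Moore–Penrose inverse of M_n; that is, the four Penrose conditions hold: M_n X M_n = M_n, X M_n X = X, (M_n X)ᵀ = M_n X, and (X M_n)ᵀ = X M_n. -/
import Mathlib


open Matrix

/-- Column-stacking `vec` of a square matrix, indexed by pairs `(i, j)` with
`(vec T) (i, j) = T i j`. -/
def vecM {n : ℕ} (T : Matrix (Fin n) (Fin n) ℝ) : Fin n × Fin n → ℝ :=
  fun p => T p.1 p.2

/-- The commutation matrix `C_n`, satisfying `C_n (vec T) = vec Tᵀ`. -/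
def commMat (n : ℕ) : Matrix (Fin n × Fin n) (Fin n × Fin n) ℝ :=
  Matrix.of fun p q => if p.1 = q.2 ∧ p.2 = q.1 then 1 else 0

/-- The matrix `M_n = I_{n²} + C_n + (vec I_n)(vec I_n)ᵀ`. -/
def Mmat (n : ℕ) : Matrix (Fin n × Fin n) (Fin n × Fin n) ℝ :=
  1 + commMat n + Matrix.vecMulVec (vecM (1 : Matrix (Fin n) (Fin n) ℝ))
    (vecM (1 : Matrix (Fin n) (Fin n) ℝ))


/-- `X = (1/4)(I_{n²} + C_n − (2/(n+2)) (vec I_n)(vec I_n)ᵀ)` is the Moore–Penrose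
inverse of `M_n`: the four Penrose conditions hold. -/
noncomputable abbrev Pm (n : ℕ) : Matrix (Fin n × Fin n) (Fin n × Fin n) ℝ :=
  Matrix.vecMulVec (vecM (1 : Matrix (Fin n) (Fin n) ℝ)) (vecM (1 : Matrix (Fin n) (Fin n) ℝ))

lemma comm_sq (n : ℕ) : commMat n * commMat n = 1 := by
  ext p q
  simp [Matrix.mul_apply, commMat, Fintype.sum_prod_type, ite_and, Matrix.one_apply,
    Finset.sum_ite_eq, Finset.sum_ite_eq', Prod.ext_iff]

lemma comm_mul_P (n : ℕ) : commMat n * Pm n = Pm n := by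
  ext p q
  simp [Matrix.mul_apply, commMat, Matrix.vecMulVec_apply, vecM, Fintype.sum_prod_type, ite_and,
    Matrix.one_apply, Finset.sum_ite_eq, Finset.sum_ite_eq']
  aesop

lemma P_mul_comm (n : ℕ) : Pm n * commMat n = Pm n := by
  ext p q
  simp [Matrix.mul_apply, commMat, Matrix.vecMulVec_apply, vecM, Fintype.sum_prod_type, ite_and,
    Matrix.one_apply, Finset.sum_ite_eq, Finset.sum_ite_eq']
  aesop

lemma P_sq (n : ℕ) : Pm n * Pm n = (n : ℝ) • Pm n := by
  ext p q
  simp [Matrix.mul_apply, Matrix.vecMulVec_apply, vecM, Fintype.sum_prod_type, ite_and,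
    Matrix.one_apply, Finset.sum_ite_eq, Finset.sum_ite_eq', mul_comm]


lemma comm_transpose (n : ℕ) : (commMat n)ᵀ = commMat n := by
  ext p q
  simp only [commMat, Matrix.transpose_apply, Matrix.of_apply]
  aesop

lemma MX (n : ℕ) :
    Mmat n * ((1/4 : ℝ) • (1 + commMat n - (2/((n : ℝ) + 2)) • Pm n))
      = (1/2 : ℝ) • (1 + commMat n) := by
  have hc : ((n : ℝ) + 2) ≠ 0 := by positivity
  show (1 + commMat n + Pm n) * _ = _
  simp only [Matrix.mul_smul, Matrix.add_mul, Matrix.mul_add, Matrix.mul_sub,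
    Matrix.mul_smul, mul_one, one_mul, comm_sq n, comm_mul_P n, P_mul_comm n, P_sq n]
  match_scalars <;> field_simp <;> ring

lemma XM (n : ℕ) :
    ((1/4 : ℝ) • (1 + commMat n - (2/((n : ℝ) + 2)) • Pm n)) * Mmat n
      = (1/2 : ℝ) • (1 + commMat n) := by
  have hc : ((n : ℝ) + 2) ≠ 0 := by positivity
  show _ * (1 + commMat n + Pm n) = _
  simp only [Matrix.smul_mul, Matrix.add_mul, Matrix.mul_add, Matrix.sub_mul,
    Matrix.smul_mul, mul_one, one_mul, comm_sq n, comm_mul_P n, P_mul_comm n, P_sq n]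
  match_scalars <;> field_simp <;> ring

theorem Mmat_moorePenrose_inverse (n : ℕ) (hn : 1 ≤ n) :
    let X : Matrix (Fin n × Fin n) (Fin n × Fin n) ℝ :=
      (1/4 : ℝ) • (1 + commMat n - (2/((n : ℝ) + 2)) •
        Matrix.vecMulVec (vecM (1 : Matrix (Fin n) (Fin n) ℝ))
          (vecM (1 : Matrix (Fin n) (Fin n) ℝ)))
    Mmat n * X * Mmat n = Mmat n ∧ X * Mmat n * X = X ∧
      (Mmat n * X)ᵀ = Mmat n * X ∧ (X * Mmat n)ᵀ = X * Mmat n := by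
  intro X
  have hMX : Mmat n * X = (1/2 : ℝ) • (1 + commMat n) := MX n
  have hXM : X * Mmat n = (1/2 : ℝ) • (1 + commMat n) := XM n
  refine ⟨?_, ?_, ?_, ?_⟩
  · rw [hMX, show Mmat n = 1 + commMat n + Pm n from rfl]
    simp only [Matrix.smul_mul, Matrix.add_mul, Matrix.mul_add, one_mul, mul_one,
      comm_sq n, comm_mul_P n]
    module
  · rw [hXM, show X = (1/4 : ℝ) • (1 + commMat n - (2/((n : ℝ) + 2)) • Pm n) from rfl]
    simp only [Matrix.smul_mul, Matrix.mul_smul, Matrix.mul_add, Matrix.mul_sub,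
      Matrix.add_mul, one_mul, mul_one, comm_sq n, comm_mul_P n]
    module
  · rw [hMX]
    simp [Matrix.transpose_smul, Matrix.transpose_add, comm_transpose n]
  · rw [hXM]
    simp [Matrix.transpose_smul, Matrix.transpose_add, comm_transpose n]
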